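/- In the front-running game, if q·P_B(s) > f and (1-q)·P_A(s) < c, then in the backward-induction equilibrium player A sends no message and consequently B sends no message either; hence the threat of front-running destroys the exchange whenever P_A(s) > c but (1-q)·P_A(s) < c. -/
import Mathlib

/-- In the front-running game, B attacks iff his expected gain from the fast
message exceeds its cost: `q * P_B(s) > f`. -/
def Battacks (q PB f : ℝ) : Prop := q * PB > f

/-- A sends her message iff her expected payoff exceeds the message cost,
correctly anticipating B's attack decision (backward induction). -/
def Asends (q c f PA PB : ℝ) : Prop :=
  (Battacks q PB f ∧ (1 - q) * PA > c) ∨ (¬ Battacks q PB f ∧ PA > c)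

/-- B sends a (fast) message iff he wants to attack and A actually sent a message. -/
def Bsends (q c f PA PB : ℝ) : Prop :=
  Battacks q PB f ∧ Asends q c f PA PB

/-- If `q·P_B(s) > f` and `(1-q)·P_A(s) < c`, then in equilibrium A sends no
message and consequently B sends no message either: even when `P_A(s) > c`,
the threat of front-running destroys the exchange. -/
theorem threat_destroys_exchange (q c f PA PB : ℝ)
    (hq0 : 0 < q) (hq1 : q < 1) (hc : 0 < c) (hf : c < f)
    (hB : q * PB > f) (hA : (1 - q) * PA < c) :
    ¬ Asends q c f PA PB ∧ ¬ Bsends q c f PA PB := by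
  have hnA : ¬ Asends q c f PA PB := by
    rintro (⟨_, h⟩ | ⟨hn, _⟩)
    · linarith
    · exact hn hB
  exact ⟨hnA, fun ⟨_, h⟩ => hnA h⟩
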